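/- If A is an optimal alignment between two strings X and Y of equal length, then for every index i with 0 ≤ i ≤ |X|, it holds that |i − A(i)| ≤ ED(X, Y)/2. -/

import Mathlib

/-- The substring of `X` with indices in `{i, ..., j-1}` (out-of-bounds indices clipped). -/
def listSub {α : Type*} (X : List α) (i j : ℕ) : List α := (X.take j).drop i

/-- Substring with possibly negative (integer) endpoints, clipped. -/
def listSubZ {α : Type*} (X : List α) (i j : ℤ) : List α := listSub X i.toNat j.toNat

namespace Levenshtein

/-- Costs of the edit operations (as in the Mathlib file `Data/List/EditDistance/Defs`,
since removed from Mathlib). -/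
structure Cost (α β δ : Type*) where
  delete : α → δ
  insert : β → δ
  substitute : α → β → δ

/-- Unit costs, as in the removed Mathlib `Levenshtein.defaultCost`. -/
def defaultCost {α : Type*} [DecidableEq α] : Cost α α ℕ where
  delete _ := 1
  insert _ := 1
  substitute a b := if a = b then 0 else 1

end Levenshtein

/-- The weighted Levenshtein distance, given by the recursion that the removed Mathlib
`levenshtein` satisfied (`levenshtein_nil_nil`, `levenshtein_nil_cons`,
`levenshtein_cons_nil`, `levenshtein_cons_cons`). -/
def levenshtein {α β δ : Type*} [AddZeroClass δ] [Min δ] (C : Levenshtein.Cost α β δ) :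
    List α → List β → δ
  | [], [] => 0
  | [], y :: ys => C.insert y + levenshtein C [] ys
  | x :: xs, [] => C.delete x + levenshtein C xs []
  | x :: xs, y :: ys =>
    min (C.delete x + levenshtein C xs (y :: ys))
      (min (C.insert y + levenshtein C (x :: xs) ys) (C.substitute x y + levenshtein C xs ys))

/-- Edit distance (Levenshtein distance) with unit costs. -/
def ED {α : Type*} [DecidableEq α] (X Y : List α) : ℕ :=
  levenshtein Levenshtein.defaultCost X Y

/-- An alignment between `X` and `Y`: a monotone non-decreasing map of positions with
`A 0 = 0` and `A |X| = |Y|`. -/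
def IsAlignment {α : Type*} (X Y : List α) (A : ℕ → ℕ) : Prop :=
  A 0 = 0 ∧ A X.length = Y.length ∧ ∀ i j, i ≤ j → j ≤ X.length → A i ≤ A j

/-- An optimal alignment: the edit distance decomposes along the alignment. -/
def IsOptimalAlignment {α : Type*} [DecidableEq α] (X Y : List α) (A : ℕ → ℕ) : Prop :=
  IsAlignment X Y A ∧
    ED X Y = ∑ i ∈ Finset.range X.length,
      ED (listSub X i (i + 1)) (listSub Y (A i) (A (i + 1)))

lemma ED_length_le {α : Type*} [DecidableEq α] :
    ∀ (X Y : List α), ((X.length : ℤ) - Y.length).natAbs ≤ ED X Y := by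
  intro X
  induction X with
  | nil =>
    intro Y
    induction Y with
    | nil => simp [ED]
    | cons y ys ih =>
      simp only [ED, levenshtein.eq_2] at *
      simp [Levenshtein.defaultCost] at *
      omega
  | cons x xs ih =>
    intro Y
    induction Y with
    | nil =>
      have := ih []
      simp only [ED, levenshtein.eq_3] at *
      simp [Levenshtein.defaultCost] at *
      omega
    | cons y ys ih2 =>
      have h1 := ih (y :: ys)
      have h2 := ih ys
      simp only [ED, levenshtein.eq_4] at *
      simp [Levenshtein.defaultCost] at *
      refine ⟨by omega, by omega, ?_⟩
      split <;> omega

lemma listSub_length {α : Type*} (X : List α) (i j : ℕ) (hi : i ≤ j) (hj : j ≤ X.length) :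
    (listSub X i j).length = j - i := by
  simp [listSub]; omega

/-- Alignments have small stretch: if `A` is an optimal alignment between equal-length
strings `X` and `Y`, then `|i - A(i)| ≤ ED(X,Y)/2` for all `0 ≤ i ≤ |X|`. -/
theorem alignments_have_small_stretch {α : Type*} [DecidableEq α]
    (X Y : List α) (hlen : X.length = Y.length) (A : ℕ → ℕ)
    (hopt : IsOptimalAlignment X Y A) :
    ∀ i ≤ X.length, 2 * ((i : ℤ) - (A i : ℤ)).natAbs ≤ ED X Y := by
  intro k hk
  obtain ⟨⟨hA0, hAn, hmono⟩, hsum⟩ := hopt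
  set n := X.length with hn
  set g : ℕ → ℤ := fun i => (A (i + 1) : ℤ) - A i - 1 with hg
  have hterm : ∀ i < n, (g i).natAbs ≤
      ED (listSub X i (i + 1)) (listSub Y (A i) (A (i + 1))) := by
    intro i hi
    have h1 : (listSub X i (i + 1)).length = 1 := by
      rw [listSub_length X i (i + 1) (by omega) (by omega)]
      omega
    have hm1 : A i ≤ A (i + 1) := hmono i (i + 1) (by omega) (by omega)
    have hm2 : A (i + 1) ≤ Y.length := by
      have := hmono (i + 1) n (by omega) le_rfl
      omega
    have h2 : (listSub Y (A i) (A (i + 1))).length = A (i + 1) - A i :=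
      listSub_length _ _ _ hm1 hm2
    have h3 := ED_length_le (listSub X i (i + 1)) (listSub Y (A i) (A (i + 1)))
    rw [h1, h2] at h3
    simp only [hg]
    omega
  have tele : ∀ m, ∑ i ∈ Finset.range m, g i = (A m : ℤ) - A 0 - m := by
    intro m
    simp only [hg]
    rw [Finset.sum_sub_distrib, Finset.sum_range_sub (fun i => (A i : ℤ))]
    simp
  have habs : ∀ s : Finset ℕ, s ⊆ Finset.range n →
      |∑ i ∈ s, g i| ≤ (∑ i ∈ s, (ED (listSub X i (i + 1)) (listSub Y (A i) (A (i + 1))) : ℤ)) := by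
    intro s hs
    refine (Finset.abs_sum_le_sum_abs _ _).trans (Finset.sum_le_sum ?_)
    intro i hi
    have hi' := Finset.mem_range.mp (hs hi)
    rw [Int.abs_eq_natAbs]
    exact_mod_cast hterm i hi'
  have h1 := habs (Finset.range k) (Finset.range_subset_range.mpr hk)
  have h2 := habs (Finset.Ico k n) (by rw [Finset.range_eq_Ico]; exact Finset.Ico_subset_Ico (Nat.zero_le _) le_rfl)
  rw [tele k] at h1
  rw [Finset.sum_Ico_eq_sub _ hk, tele n, tele k] at h2
  have hsplit : (ED X Y : ℤ) =
      (∑ i ∈ Finset.range k, (ED (listSub X i (i + 1)) (listSub Y (A i) (A (i + 1))) : ℤ)) +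
      ∑ i ∈ Finset.Ico k n, (ED (listSub X i (i + 1)) (listSub Y (A i) (A (i + 1))) : ℤ) := by
    rw [Finset.range_eq_Ico, ← Finset.sum_Ico_consecutive _ (Nat.zero_le k) hk,
      ← Finset.range_eq_Ico] at hsum
    push_cast [hsum]
    ring
  have hAneq : (A n : ℤ) = (n : ℤ) := by rw [hAn, hlen]
  rw [hA0] at h1 h2
  rw [hAneq] at h2
  simp only [Nat.cast_zero, sub_zero] at h1 h2
  have key : (2 * ((k : ℤ) - A k).natAbs : ℤ) ≤ (ED X Y : ℤ) := by
    rw [hsplit]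
    rw [Int.abs_eq_natAbs] at h1 h2
    omega
  exact_mod_cast key
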